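/- Let π ≤ β ≤ 2π and let ψ be the normalized positive solution of the boundary value problem with c = c_β, and set g(θ) = ψ'(θ)·sin θ/ψ(θ). Then g is monotone decreasing on (0, π/2]. -/

import Mathlib

set_option maxHeartbeats 1000000


open Real Set Filter
open scoped Classical

/-- `c` solves the Hardy-constant equation for the angle `β`. -/
def hardyEq (c β : ℝ) : Prop :=
  Real.sqrt c * Real.tan (Real.sqrt c * ((β - Real.pi) / 2)) =
    2 * (Real.Gamma ((3 + Real.sqrt (1 - 4 * c)) / 4) /
         Real.Gamma ((1 + Real.sqrt (1 - 4 * c)) / 4)) ^ 2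

/-- `βcr` is the critical angle: the unique angle in `(π, 2π)` with
`tan((βcr − π)/4) = 4 (Γ(3/4)/Γ(1/4))²`. -/
def isBetaCr (βcr : ℝ) : Prop :=
  βcr ∈ Set.Ioo Real.pi (2 * Real.pi) ∧
    Real.tan ((βcr - Real.pi) / 4) = 4 * (Real.Gamma (3 / 4) / Real.Gamma (1 / 4)) ^ 2

/-- `c = c_β`: for `β ≤ βcr`, `c = 1/4`; for `β > βcr`, `c` is the unique solution in
`(0, 1/4]` of the Hardy-constant equation for `β`. -/
def isHardyConst (βcr β c : ℝ) : Prop :=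
  (β ≤ βcr ∧ c = 1 / 4) ∨ (βcr < β ∧ c ∈ Set.Ioc (0 : ℝ) (1 / 4) ∧ hardyEq c β)

/-- The potential `V` on `(0, β)`. -/
noncomputable def Vpot (β θ : ℝ) : ℝ :=
  if θ < Real.pi / 2 then 1 / Real.sin θ ^ 2
  else if θ < β - Real.pi / 2 then 1
  else 1 / Real.sin (β - θ) ^ 2

/-- Let `ψ` be the normalized positive solution (extended symmetrically to `(0, β)`) of
`−ψ'' = c_β·V·ψ` with `ψ'(β/2) = 0` and `ψ(θ)/θ^α → 1` as `θ → 0+`, where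
`α = (1+√(1−4c_β))/2`.  Then `g(θ) = ψ'(θ)·sin θ/ψ(θ)` is monotone decreasing on
`(0, π/2]`. -/
theorem g_antitone
    (β βcr cβ α : ℝ) (ψ ψ' : ℝ → ℝ)
    (hβ1 : Real.pi ≤ β) (hβ2 : β ≤ 2 * Real.pi)
    (hβcr : isBetaCr βcr) (hcβ : isHardyConst βcr β cβ)
    (hα : α = (1 + Real.sqrt (1 - 4 * cβ)) / 2)
    (hpos : ∀ θ ∈ Set.Ioo 0 β, 0 < ψ θ)
    (hder : ∀ θ ∈ Set.Ioo 0 β, HasDerivAt ψ (ψ' θ) θ)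
    (hode : ∀ θ ∈ Set.Ioo 0 β, HasDerivAt ψ' (-(cβ * Vpot β θ * ψ θ)) θ)
    (hbc : ψ' (β / 2) = 0)
    (hsym : ∀ θ, ψ (β - θ) = ψ θ)
    (hnorm : Filter.Tendsto (fun θ => ψ θ / θ ^ α) (nhdsWithin 0 (Set.Ioi 0)) (nhds 1)) :
    AntitoneOn (fun θ => ψ' θ * Real.sin θ / ψ θ) (Set.Ioc 0 (Real.pi / 2)) := by
  have hπ := Real.pi_pos
  have hc0 : 0 < cβ := by
    rcases hcβ with ⟨_, h⟩ | ⟨_, h, _⟩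
    · rw [h]; norm_num
    · exact h.1
  have hc4 : cβ ≤ 1 / 4 := by
    rcases hcβ with ⟨_, h⟩ | ⟨_, h, _⟩
    · rw [h]
    · exact h.2
  set g : ℝ → ℝ := fun θ => ψ' θ * Real.sin θ / ψ θ with hg
  set Q : ℝ → ℝ := fun θ => g θ ^ 2 - g θ * Real.cos θ + cβ with hQ
  have hsub : Set.Ioc 0 (Real.pi / 2) ⊆ Set.Ioo 0 β := by
    intro x hx; exact ⟨hx.1, by nlinarith [hx.2]⟩
  have hsin : ∀ x ∈ Set.Ioc 0 (Real.pi / 2), 0 < Real.sin x := by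
    intro x hx; exact Real.sin_pos_of_pos_of_lt_pi hx.1 (by nlinarith [hx.2])
  -- derivative of g
  have hgd : ∀ x ∈ Set.Ioo 0 (Real.pi / 2), HasDerivAt g (-(Q x) / Real.sin x) x := by
    intro x hx
    have hxm : x ∈ Set.Ioc 0 (Real.pi / 2) := ⟨hx.1, hx.2.le⟩
    have hxβ : x ∈ Set.Ioo 0 β := hsub hxm
    have hsx : 0 < Real.sin x := hsin x hxm
    have hψx : 0 < ψ x := hpos x hxβ
    have hodex : HasDerivAt ψ' (-(cβ * (1 / Real.sin x ^ 2) * ψ x)) x := by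
      have h := hode x hxβ
      rwa [show Vpot β x = 1 / Real.sin x ^ 2 from if_pos hx.2] at h
    have hn : HasDerivAt (fun θ => ψ' θ * Real.sin θ)
        (-(cβ * (1 / Real.sin x ^ 2) * ψ x) * Real.sin x + ψ' x * Real.cos x) x :=
      hodex.mul (Real.hasDerivAt_sin x)
    have hgd' := hn.div (hder x hxβ) (ne_of_gt hψx)
    refine hgd'.congr_deriv ?_
    simp only [hQ, hg]
    field_simp
    ring
  -- derivative of Q
  have hQd : ∀ x ∈ Set.Ioo 0 (Real.pi / 2), HasDerivAt Q
      (2 * g x * (-(Q x) / Real.sin x) -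
        ((-(Q x) / Real.sin x) * Real.cos x + g x * (-Real.sin x))) x := by
    intro x hx
    have h1 := ((hgd x hx).pow 2).sub ((hgd x hx).mul (Real.hasDerivAt_cos x))
    have h2 := h1.add_const cβ
    refine h2.congr_deriv ?_
    ring
  have hgc : ∀ x ∈ Set.Ioc 0 (Real.pi / 2), ContinuousAt g x := by
    intro x hx
    have hxβ := hsub hx
    exact (((hode x hxβ).continuousAt.mul Real.continuous_sin.continuousAt).div
      (hder x hxβ).continuousAt (ne_of_gt (hpos x hxβ)))
  have hQc : ∀ x ∈ Set.Ioc 0 (Real.pi / 2), ContinuousAt Q x := by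
    intro x hx
    exact ((hgc x hx).pow 2).sub ((hgc x hx).mul Real.continuous_cos.continuousAt) |>.add
      continuousAt_const
  -- basic facts about α
  have hs0 : (0:ℝ) ≤ 1 - 4 * cβ := by linarith
  have hsq : Real.sqrt (1 - 4 * cβ) ^ 2 = 1 - 4 * cβ := Real.sq_sqrt hs0
  have hsnn : 0 ≤ Real.sqrt (1 - 4 * cβ) := Real.sqrt_nonneg _
  have hα2 : 2 * α = 1 + Real.sqrt (1 - 4 * cβ) := by rw [hα]; ring
  have hαpos : 0 < α := by nlinarith
  -- main claim : Q ≥ 0 on (0, π/2)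
  have hQnn : ∀ x ∈ Set.Ioo 0 (Real.pi / 2), 0 ≤ Q x := by
    intro θ₀ hθ₀
    by_contra hneg
    push_neg at hneg
    have hθ₀m : θ₀ ∈ Set.Ioc 0 (Real.pi / 2) := ⟨hθ₀.1, hθ₀.2.le⟩
    set S : Set ℝ := {θ | θ ∈ Set.Ioc 0 θ₀ ∧ 0 ≤ Q θ} with hS
    rcases eq_empty_or_nonempty S with hSe | hSne
    · -- Q < 0 on all of (0, θ₀]; growth contradiction
      have hQneg : ∀ θ ∈ Set.Ioc 0 θ₀, Q θ < 0 := by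
        intro θ hθ
        by_contra h
        push_neg at h
        exact absurd (by exact ⟨θ, hθ, h⟩ : S.Nonempty) (by simp [hSe])
      have hsub₀ : Set.Ioc 0 θ₀ ⊆ Set.Ioc 0 (Real.pi / 2) := fun x hx => ⟨hx.1, hx.2.trans hθ₀.2.le⟩
      have hsub₀' : Set.Ioo 0 θ₀ ⊆ Set.Ioo 0 (Real.pi / 2) := fun x hx => ⟨hx.1, hx.2.trans hθ₀.2⟩
      have hmono : StrictMonoOn g (Set.Ioc 0 θ₀) := by
        apply strictMonoOn_of_deriv_pos (convex_Ioc 0 θ₀)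
        · intro x hx
          exact (hgc x (hsub₀ hx)).continuousWithinAt
        · intro x hx
          rw [interior_Ioc] at hx
          rw [(hgd x (hsub₀' hx)).deriv]
          have hQx := hQneg x ⟨hx.1, hx.2.le⟩
          have hsx := hsin x (hsub₀ ⟨hx.1, hx.2.le⟩)
          exact div_pos (by linarith) hsx
      have hgM : ∀ θ ∈ Set.Ioc 0 θ₀, g θ ≤ g θ₀ := by
        intro θ hθ
        rcases eq_or_lt_of_le hθ.2 with h | h
        · rw [h]
        · exact (hmono hθ ⟨hθ₀.1, le_refl _⟩ h).le
      -- g θ₀ < α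
      have hcosθ₀ : 0 < Real.cos θ₀ := Real.cos_pos_of_mem_Ioo ⟨by linarith [hθ₀.1], hθ₀.2⟩
      have hcos1 : Real.cos θ₀ < 1 := by
        have := Real.strictAntiOn_cos (show (0:ℝ) ∈ Set.Icc 0 Real.pi from ⟨le_refl 0, by linarith⟩)
          (show θ₀ ∈ Set.Icc 0 Real.pi from ⟨hθ₀.1.le, by linarith [hθ₀.2]⟩) hθ₀.1
        simpa using this
      have hQθ₀ := hneg
      have hQθ₀' : g θ₀ ^ 2 - g θ₀ * Real.cos θ₀ + cβ < 0 := hneg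
      have hMα : g θ₀ < α := by
        by_contra h
        push_neg at h
        have h1 : Real.sqrt (1 - 4*cβ) < 2 * g θ₀ - Real.cos θ₀ := by nlinarith
        have h2 : (1 - 4*cβ) < (2 * g θ₀ - Real.cos θ₀) ^ 2 := by
          nlinarith [sq_nonneg (2 * g θ₀ - Real.cos θ₀ - Real.sqrt (1 - 4*cβ))]
        nlinarith [sq_nonneg (Real.cos θ₀)]
      set M' : ℝ := max (g θ₀) (α / 2) with hM'
      have hM'pos : 0 < M' := lt_of_lt_of_le (by linarith) (le_max_right _ _)
      have hM'α : M' < α := max_lt hMα (by linarith)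
      set M'' : ℝ := (M' + α) / 2 with hM''
      have hM''pos : 0 < M'' := by positivity
      have hM'M'' : M' < M'' := by simp only [hM'']; linarith
      have hM''α : M'' < α := by simp only [hM'']; linarith
      set r : ℝ := M' / M'' with hr
      have hrpos : 0 < r := div_pos hM'pos hM''pos
      have hr1 : r < 1 := (div_lt_one hM''pos).mpr hM'M''
      set δ : ℝ := min θ₀ (min 1 (Real.sqrt (1 - r))) with hδ
      have hδpos : 0 < δ := by
        apply lt_min hθ₀.1
        apply lt_min one_pos
        exact Real.sqrt_pos.mpr (by linarith)
      have hδθ₀ : δ ≤ θ₀ := min_le_left _ _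
      have hδ1 : δ ≤ 1 := le_trans (min_le_right _ _) (min_le_left _ _)
      have hδr : δ ≤ Real.sqrt (1 - r) := le_trans (min_le_right _ _) (min_le_right _ _)
      have hsinr : ∀ θ ∈ Set.Ioc 0 δ, r * θ ≤ Real.sin θ := by
        intro θ hθ
        have h1 : θ - θ^3/4 < Real.sin θ := by nlinarith [Real.sin_gt_sub_cube hθ.1, pow_pos hθ.1 3]
        have h2 : θ^2 ≤ 1 - r := by
          have : θ ≤ Real.sqrt (1 - r) := hθ.2.trans hδr
          nlinarith [Real.sq_sqrt (show (0:ℝ) ≤ 1 - r by linarith), hθ.1]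
        nlinarith [hθ.1]
      have hψ'b : ∀ θ ∈ Set.Ioc 0 δ, ψ' θ ≤ M'' * ψ θ / θ := by
        intro θ hθ
        have hθm : θ ∈ Set.Ioc 0 θ₀ := ⟨hθ.1, hθ.2.trans hδθ₀⟩
        have hθβ : θ ∈ Set.Ioo 0 β := hsub (hsub₀ hθm)
        have hψθ : 0 < ψ θ := hpos θ hθβ
        have hsθ : 0 < Real.sin θ := hsin θ (hsub₀ hθm)
        have hgθ : g θ ≤ M' := le_trans (hgM θ hθm) (le_max_left _ _)
        have h1 : ψ' θ * Real.sin θ ≤ M' * ψ θ := by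
          have := (div_le_iff₀ hψθ).mp hgθ
          linarith
        have hrs := hsinr θ hθ
        rcases le_or_gt (ψ' θ) 0 with h | h
        · have : 0 < M'' * ψ θ / θ := div_pos (mul_pos hM''pos hψθ) hθ.1
          linarith
        · rw [le_div_iff₀ hθ.1]
          have h2 : ψ' θ * (r * θ) ≤ ψ' θ * Real.sin θ := by
            apply mul_le_mul_of_nonneg_left hrs h.le
          have h3 : ψ' θ * (r * θ) ≤ M' * ψ θ := le_trans h2 h1
          have hM'eq : M' = M'' * r := by
            rw [hr]; field_simp
          nlinarith [hM'eq]
      -- F = ψ θ / θ ^ M'' is antitone on (0, δ]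
      set F : ℝ → ℝ := fun θ => ψ θ / θ ^ M'' with hF
      have hFd : ∀ x ∈ Set.Ioc 0 δ, HasDerivAt F
          ((ψ' x * x ^ M'' - ψ x * (M'' * x ^ (M'' - 1))) / (x ^ M'') ^ 2) x := by
        intro x hx
        have hxβ : x ∈ Set.Ioo 0 β := hsub (hsub₀ ⟨hx.1, hx.2.trans hδθ₀⟩)
        exact (hder x hxβ).div (Real.hasDerivAt_rpow_const (Or.inl (ne_of_gt hx.1)))
          (ne_of_gt (Real.rpow_pos_of_pos hx.1 _))
      have hFanti : AntitoneOn F (Set.Ioc 0 δ) := by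
        apply antitoneOn_of_deriv_nonpos (convex_Ioc 0 δ)
        · intro x hx; exact (hFd x hx).continuousAt.continuousWithinAt
        · intro x hx
          rw [interior_Ioc] at hx
          exact (hFd x ⟨hx.1, hx.2.le⟩).differentiableAt.differentiableWithinAt
        · intro x hx
          rw [interior_Ioc] at hx
          have hx' : x ∈ Set.Ioc 0 δ := ⟨hx.1, hx.2.le⟩
          rw [(hFd x hx').deriv]
          have hxβ : x ∈ Set.Ioo 0 β := hsub (hsub₀ ⟨hx.1, (hx.2.trans_le hδθ₀).le⟩)
          have hψx : 0 < ψ x := hpos x hxβ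
          have hb := hψ'b x hx'
          have hrp : 0 < x ^ M'' := Real.rpow_pos_of_pos hx.1 _
          apply div_nonpos_of_nonpos_of_nonneg _ (sq_nonneg _)
          have hxm1 : x ^ (M'' - 1) = x ^ M'' / x := by
            rw [Real.rpow_sub hx.1, Real.rpow_one]
          rw [hxm1]
          have h2 : ψ' x * x ^ M'' ≤ (M'' * ψ x / x) * x ^ M'' :=
            mul_le_mul_of_nonneg_right hb hrp.le
          have : ψ x * (M'' * (x ^ M'' / x)) = (M'' * ψ x / x) * x ^ M'' := by
            field_simp
          linarith [this ▸ h2]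
      have hδβ : δ ∈ Set.Ioo 0 β := hsub (hsub₀ ⟨hδpos, hδθ₀⟩)
      have hCpos : 0 < F δ := div_pos (hpos δ hδβ) (Real.rpow_pos_of_pos hδpos _)
      have hlow : ∀ θ ∈ Set.Ioc 0 δ, F δ * θ ^ M'' ≤ ψ θ := by
        intro θ hθ
        have := hFanti hθ ⟨hδpos, le_refl _⟩ hθ.2
        have hrp : 0 < θ ^ M'' := Real.rpow_pos_of_pos hθ.1 _
        rw [hF] at this
        calc F δ * θ ^ M'' ≤ (ψ θ / θ ^ M'') * θ ^ M'' := by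
              exact mul_le_mul_of_nonneg_right this hrp.le
          _ = ψ θ := by field_simp
      -- contradiction with hnorm
      have hev1 : ∀ᶠ θ in nhdsWithin 0 (Set.Ioi 0), ψ θ / θ ^ α < 2 :=
        hnorm.eventually_lt_const (by norm_num)
      have hev2 : ∀ᶠ θ in nhdsWithin 0 (Set.Ioi 0), θ ^ (α - M'') < F δ / 2 := by
        have hcont : ContinuousAt (fun x : ℝ => x ^ (α - M'')) 0 :=
          Real.continuousAt_rpow_const 0 _ (Or.inr (by linarith))
        have h0 : (0:ℝ) ^ (α - M'') = 0 := Real.zero_rpow (ne_of_gt (show (0:ℝ) < α - M'' by linarith))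
        have ht : Tendsto (fun x : ℝ => x ^ (α - M'')) (nhdsWithin 0 (Set.Ioi 0)) (nhds 0) := by
          have := hcont.tendsto
          rw [h0] at this
          exact this.mono_left nhdsWithin_le_nhds
        exact ht.eventually_lt_const (by positivity)
      have hev3 : ∀ᶠ θ in nhdsWithin 0 (Set.Ioi 0), θ ∈ Set.Ioc 0 δ := by
        filter_upwards [self_mem_nhdsWithin,
          eventually_nhdsWithin_of_eventually_nhds (eventually_le_nhds hδpos)] with θ h1 h2
        exact ⟨h1, h2⟩
      obtain ⟨θ, ⟨h1, h2⟩, h3⟩ := ((hev1.and hev2).and hev3).exists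
      have hθpos : 0 < θ := h3.1
      have hrpα : 0 < θ ^ α := Real.rpow_pos_of_pos hθpos _
      have hrpM : 0 < θ ^ M'' := Real.rpow_pos_of_pos hθpos _
      have hsplit : θ ^ α = θ ^ M'' * θ ^ (α - M'') := by
        rw [← Real.rpow_add hθpos]; ring_nf
      have hψθ : ψ θ < 2 * θ ^ α := by
        have := (div_lt_iff₀ hrpα).mp h1
        linarith
      have hlow' := hlow θ h3
      rw [hsplit] at hψθ
      nlinarith [hrpM, h2, hCpos]
    · -- S nonempty: consider s = sSup S
      have hbdd : BddAbove S := ⟨θ₀, fun x hx => hx.1.2⟩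
      set s : ℝ := sSup S with hs
      obtain ⟨x₀, hx₀⟩ := id hSne
      have hx₀s : x₀ ≤ s := le_csSup hbdd hx₀
      have hspos : 0 < s := lt_of_lt_of_le hx₀.1.1 hx₀s
      have hsθ₀ : s ≤ θ₀ := csSup_le hSne (fun x hx => hx.1.2)
      have hsIoo : s ∈ Set.Ioo 0 (Real.pi / 2) := ⟨hspos, lt_of_le_of_lt hsθ₀ hθ₀.2⟩
      have hQcs : ContinuousAt Q s := hQc s ⟨hspos, hsIoo.2.le⟩
      -- Q s ≥ 0
      have hQs_nn : 0 ≤ Q s := by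
        by_contra h
        push_neg at h
        have : ∀ᶠ x in nhds s, Q x < 0 := hQcs.eventually_lt_const h
        obtain ⟨ε, hε, hball⟩ := Metric.eventually_nhds_iff.mp this
        obtain ⟨x, hxS, hxlt⟩ := exists_lt_of_lt_csSup hSne (show s - ε < s by linarith)
        have hxle : x ≤ s := le_csSup hbdd hxS
        have : Q x < 0 := hball (by rw [Real.dist_eq]; rw [abs_lt]; constructor <;> linarith)
        linarith [hxS.2]
      -- every θ in (s, θ₀] has Q θ < 0
      have hQlt : ∀ θ, s < θ → θ ≤ θ₀ → Q θ < 0 := by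
        intro θ hθ1 hθ2
        by_contra h
        push_neg at h
        have : θ ∈ S := ⟨⟨lt_trans hspos hθ1, hθ2⟩, h⟩
        linarith [le_csSup hbdd this]
      have hslt : s < θ₀ := by
        rcases lt_or_eq_of_le hsθ₀ with h | h
        · exact h
        · exfalso; rw [h] at hQs_nn; linarith
      -- Q s ≤ 0 hence Q s = 0
      have hQs0 : Q s = 0 := by
        refine le_antisymm ?_ hQs_nn
        by_contra h
        push_neg at h
        have : ∀ᶠ x in nhds s, 0 < Q x := hQcs.eventually_const_lt h
        obtain ⟨ε, hε, hball⟩ := Metric.eventually_nhds_iff.mp this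
        set θ := min (s + ε/2) ((s + θ₀)/2) with hθ
        have hθ1 : s < θ := lt_min (by linarith) (by linarith)
        have hθ2 : θ ≤ θ₀ := le_trans (min_le_right _ _) (by linarith)
        have hθ3 : dist θ s < ε := by
          rw [Real.dist_eq, abs_lt]
          constructor
          · linarith [lt_min (show s < s + ε/2 by linarith) (show s < (s+θ₀)/2 by linarith)]
          · linarith [min_le_left (s + ε/2) ((s + θ₀)/2)]
        exact absurd (hball hθ3) (not_lt.mpr (hQlt θ hθ1 hθ2).le)
      -- g s > 0
      have hcoss : 0 < Real.cos s := Real.cos_pos_of_mem_Ioo ⟨by linarith [hsIoo.1], hsIoo.2⟩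
      have hgs : 0 < g s := by
        by_contra h
        push_neg at h
        have h1 : g s ^ 2 - g s * Real.cos s + cβ = 0 := hQs0
        nlinarith [sq_nonneg (g s)]
      -- Q' s = g s * sin s > 0 ⇒ Q > 0 just after s, contradiction
      have hsins : 0 < Real.sin s := hsin s ⟨hspos, hsIoo.2.le⟩
      have hQds := hQd s hsIoo
      rw [hQs0] at hQds
      simp only [neg_zero, zero_div, mul_zero, zero_mul, zero_sub, sub_zero] at hQds
      have hQds' : HasDerivAt Q (g s * Real.sin s) s := by
        convert hQds using 1; ring
      have hslope := hasDerivAt_iff_tendsto_slope.mp hQds'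
      have hdpos : 0 < g s * Real.sin s := mul_pos hgs hsins
      have hev : ∀ᶠ x in nhdsWithin s {s}ᶜ, 0 < slope Q s x :=
        hslope.eventually_const_lt hdpos
      have hev' : ∀ᶠ x in nhdsWithin s (Set.Ioi s), 0 < slope Q s x :=
        hev.filter_mono (nhdsWithin_mono s (fun x hx => ne_of_gt hx))
      have hev2 : ∀ᶠ x in nhdsWithin s (Set.Ioi s), x < θ₀ :=
        eventually_nhdsWithin_of_eventually_nhds (eventually_lt_nhds hslt)
      obtain ⟨x, hx1, hx2, hx3⟩ := (hev'.and (hev2.and self_mem_nhdsWithin)).exists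
      have hxs : s < x := hx3
      have hslope_val : slope Q s x = Q x / (x - s) := by
        rw [slope_def_field, hQs0, sub_zero]
      rw [hslope_val] at hx1
      have : 0 < Q x := by
        have := (div_pos_iff.mp hx1)
        rcases this with ⟨h, _⟩ | ⟨_, h2⟩
        · exact h
        · linarith
      linarith [hQlt x hxs hx2.le]
  -- conclude
  apply antitoneOn_of_deriv_nonpos (convex_Ioc 0 (Real.pi / 2))
  · intro x hx; exact (hgc x hx).continuousWithinAt
  · intro x hx
    rw [interior_Ioc] at hx
    exact (hgd x hx).differentiableAt.differentiableWithinAt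
  · intro x hx
    rw [interior_Ioc] at hx
    rw [(hgd x hx).deriv]
    apply div_nonpos_of_nonpos_of_nonneg
    · simpa using hQnn x hx
    · exact (hsin x ⟨hx.1, hx.2.le⟩).le
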